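/- Let (Ω, F, P) be a probability space with a filtration (F_t)_{t=0,…,T}. For each t ∈ {1,…,T} let a_t : Ω → ℝ^d be an F_t-measurable random vector with ‖a_t‖₂ ≤ 1 almost surely, and let δ_t be an F_{t−1}-measurable version of the conditional expectation E[a_t | F_{t−1}]. Let R : ℝ^d → ℝ be L-Lipschitz for the Euclidean norm. Then |E[R((1/T)Σ_{t=1}^T a_t) − R((1/T)Σ_{t=1}^T δ_t)]| ≤ 2L√(d/T). -/

import Mathlib

open MeasureTheory

lemma condexp_comp_clm {α E F : Type*} [NormedAddCommGroup E] [NormedSpace ℝ E]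
    [CompleteSpace E] [NormedAddCommGroup F] [NormedSpace ℝ F] [CompleteSpace F]
    {m m0 : MeasurableSpace α} {μ : Measure α} [IsFiniteMeasure μ]
    (hm : m ≤ m0) (L : E →L[ℝ] F) {f : α → E} (hf : Integrable f μ) :
    (fun ω => L ((μ[f | m]) ω)) =ᵐ[μ] μ[fun ω => L (f ω) | m] := by
  haveI : SigmaFinite (μ.trim hm) := by infer_instance
  refine ae_eq_condExp_of_forall_setIntegral_eq hm (L.integrable_comp hf)
    (fun s _ _ => (L.integrable_comp integrable_condExp).integrableOn)
    (fun s hs hμs => ?_)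
    ((L.continuous.comp_stronglyMeasurable stronglyMeasurable_condExp).aestronglyMeasurable)
  rw [L.integral_comp_comm integrable_condExp.integrableOn,
    L.integral_comp_comm hf.integrableOn, setIntegral_condExp hm hf hs]

lemma abs_coord_le_norm {d : ℕ} (x : EuclideanSpace ℝ (Fin d)) (i : Fin d) :
    |x i| ≤ ‖x‖ := by
  rw [EuclideanSpace.norm_eq, ← Real.sqrt_sq_eq_abs]
  refine Real.sqrt_le_sqrt ?_
  have := Finset.single_le_sum (f := fun j => ‖x j‖ ^ 2)
    (fun j _ => sq_nonneg _) (Finset.mem_univ i)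
  simpa [Real.norm_eq_abs, sq_abs] using this

/-- Lemma 2 of the paper: if `a_t` is `F_t`-measurable with `‖a_t‖ ≤ 1`
a.s. and `δ_t` is an `F_{t−1}`-measurable version of `E[a_t | F_{t−1}]`, then for any
`L`-Lipschitz `R`,
`|E[R((1/T)Σ a_t) − R((1/T)Σ δ_t)]| ≤ 2L√(d/T)`. -/
theorem stmt5 {d : ℕ} {Ω : Type*} {m0 : MeasurableSpace Ω}
    (P : Measure Ω) [IsProbabilityMeasure P]
    (ℱ : Filtration ℕ m0) (T : ℕ) (hT : 0 < T)
    (a δ : ℕ → Ω → EuclideanSpace ℝ (Fin d))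
    (ha_meas : ∀ t ∈ Finset.Icc 1 T, StronglyMeasurable[ℱ t] (a t))
    (ha_bdd : ∀ t ∈ Finset.Icc 1 T, ∀ᵐ ω ∂P, ‖a t ω‖ ≤ 1)
    (hδ_meas : ∀ t ∈ Finset.Icc 1 T, StronglyMeasurable[ℱ (t - 1)] (δ t))
    (hδ_ver : ∀ t ∈ Finset.Icc 1 T, δ t =ᵐ[P] P[a t | ℱ (t - 1)])
    (L : NNReal) (R : EuclideanSpace ℝ (Fin d) → ℝ) (hR : LipschitzWith L R) :
    |∫ ω, (R ((T : ℝ)⁻¹ • ∑ t ∈ Finset.Icc 1 T, a t ω)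
         - R ((T : ℝ)⁻¹ • ∑ t ∈ Finset.Icc 1 T, δ t ω)) ∂P|
      ≤ 2 * (L : ℝ) * Real.sqrt ((d : ℝ) / (T : ℝ)) := by
  classical
  set I := Finset.Icc 1 T with hIdef
  have hle : ∀ n, ℱ n ≤ m0 := fun n => ℱ.le n
  haveI : ∀ n, SigmaFinite (P.trim (hle n)) := fun n => by infer_instance
  -- basic integrability
  have haInt : ∀ t ∈ I, Integrable (a t) P := fun t ht =>
    (integrable_const (1 : ℝ)).mono'
      ((ha_meas t ht).mono (hle t)).aestronglyMeasurable (ha_bdd t ht)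
  have hδInt : ∀ t ∈ I, Integrable (δ t) P := fun t ht =>
    integrable_condExp.congr (hδ_ver t ht).symm
  -- coordinates
  have hai_sm : ∀ t ∈ I, ∀ i : Fin d, StronglyMeasurable[ℱ t] (fun ω => a t ω i) :=
    fun t ht i => (EuclideanSpace.proj (𝕜 := ℝ) i).continuous.comp_stronglyMeasurable
      (ha_meas t ht)
  have hδi_sm : ∀ t ∈ I, ∀ i : Fin d, StronglyMeasurable[ℱ (t - 1)] (fun ω => δ t ω i) :=
    fun t ht i => (EuclideanSpace.proj (𝕜 := ℝ) i).continuous.comp_stronglyMeasurable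
      (hδ_meas t ht)
  have haiInt : ∀ t ∈ I, ∀ i : Fin d, Integrable (fun ω => a t ω i) P :=
    fun t ht i => (EuclideanSpace.proj (𝕜 := ℝ) i).integrable_comp (haInt t ht)
  have hδiInt : ∀ t ∈ I, ∀ i : Fin d, Integrable (fun ω => δ t ω i) P :=
    fun t ht i => (EuclideanSpace.proj (𝕜 := ℝ) i).integrable_comp (hδInt t ht)
  have hai_bdd : ∀ t ∈ I, ∀ i : Fin d, ∀ᵐ ω ∂P, |a t ω i| ≤ 1 :=
    fun t ht i => (ha_bdd t ht).mono fun ω h => (abs_coord_le_norm _ i).trans h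
  -- δ coordinate is the condexp of the a coordinate
  have hδi : ∀ t ∈ I, ∀ i : Fin d,
      (fun ω => δ t ω i) =ᵐ[P] P[fun ω => a t ω i | ℱ (t - 1)] := by
    intro t ht i
    have h1 := condexp_comp_clm (hle (t - 1)) (EuclideanSpace.proj (𝕜 := ℝ) i) (haInt t ht)
    have h2 : (fun ω => δ t ω i) =ᵐ[P] fun ω => (P[a t | ℱ (t - 1)]) ω i :=
      (hδ_ver t ht).mono fun ω h => by
        show δ t ω i = (P[a t | ℱ (t - 1)]) ω i
        rw [h]
    exact h2.trans h1
  have hδi_bdd : ∀ t ∈ I, ∀ i : Fin d, ∀ᵐ ω ∂P, |δ t ω i| ≤ 1 := by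
    intro t ht i
    have hb : ∀ᵐ ω ∂P, |a t ω i| ≤ ((1 : NNReal) : ℝ) := by
      simpa using hai_bdd t ht i
    have := ae_bdd_condExp_of_ae_bdd (m := ℱ (t - 1)) (μ := P) hb
    filter_upwards [hδi t ht i, this] with ω h1 h2
    have h1' : δ t ω i = (P[fun ω => a t ω i | ℱ (t - 1)]) ω := h1
    rw [h1']
    simpa using h2
  -- the coordinate differences
  set g : ℕ → Fin d → Ω → ℝ := fun t i ω => a t ω i - δ t ω i with hgdef
  have hg_sm0 : ∀ t ∈ I, ∀ i : Fin d, StronglyMeasurable (g t i) := fun t ht i =>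
    ((hai_sm t ht i).mono (hle t)).sub ((hδi_sm t ht i).mono (hle (t - 1)))
  have hg_bdd : ∀ t ∈ I, ∀ i : Fin d, ∀ᵐ ω ∂P, |g t i ω| ≤ 2 := by
    intro t ht i
    filter_upwards [hai_bdd t ht i, hδi_bdd t ht i] with ω h1 h2
    calc |g t i ω| ≤ |a t ω i| + |δ t ω i| := abs_sub _ _
      _ ≤ 2 := by linarith
  have hgInt : ∀ t ∈ I, ∀ i : Fin d, Integrable (g t i) P :=
    fun t ht i => (haiInt t ht i).sub (hδiInt t ht i)
  have hprodInt : ∀ s ∈ I, ∀ t ∈ I, ∀ i : Fin d,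
      Integrable (fun ω => g s i ω * g t i ω) P := by
    intro s hs t ht i
    refine (integrable_const (4 : ℝ)).mono'
      (((hg_sm0 s hs i).mul (hg_sm0 t ht i)).aestronglyMeasurable) ?_
    filter_upwards [hg_bdd s hs i, hg_bdd t ht i] with ω h1 h2
    rw [Real.norm_eq_abs, abs_mul]
    calc |g s i ω| * |g t i ω| ≤ 2 * 2 := by
          exact mul_le_mul h1 h2 (abs_nonneg _) (by norm_num)
      _ = 4 := by norm_num
  -- martingale difference property
  have hg0 : ∀ t ∈ I, ∀ i : Fin d, (P[g t i | ℱ (t - 1)]) =ᵐ[P] 0 := by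
    intro t ht i
    have h1 : (P[g t i | ℱ (t - 1)]) =ᵐ[P]
        P[fun ω => a t ω i | ℱ (t - 1)] - P[fun ω => δ t ω i | ℱ (t - 1)] :=
      condExp_sub (haiInt t ht i) (hδiInt t ht i) _
    have h2 : (P[fun ω => δ t ω i | ℱ (t - 1)]) = fun ω => δ t ω i :=
      condExp_of_stronglyMeasurable (hle (t - 1)) (hδi_sm t ht i) (hδiInt t ht i)
    filter_upwards [h1, hδi t ht i] with ω hω1 hω2
    have hω2' : δ t ω i = (P[fun ω => a t ω i | ℱ (t - 1)]) ω := hω2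
    have hω1' : (P[g t i | ℱ (t - 1)]) ω
        = (P[fun ω => a t ω i | ℱ (t - 1)]) ω - (P[fun ω => δ t ω i | ℱ (t - 1)]) ω := hω1
    show (P[g t i | ℱ (t - 1)]) ω = 0
    rw [hω1', h2]
    show (P[fun ω => a t ω i | ℱ (t - 1)]) ω - δ t ω i = 0
    rw [hω2']
    ring
  -- cross terms vanish
  have hcross : ∀ s ∈ I, ∀ t ∈ I, s < t → ∀ i : Fin d,
      ∫ ω, g s i ω * g t i ω ∂P = 0 := by
    intro s hs t ht hst i
    have hsm : StronglyMeasurable[ℱ (t - 1)] (g s i) := by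
      have h1 : (ℱ s) ≤ ℱ (t - 1) := ℱ.mono (by omega)
      have h2 : (ℱ (s - 1)) ≤ ℱ (t - 1) := ℱ.mono (by omega)
      exact ((hai_sm s hs i).mono h1).sub ((hδi_sm s hs i).mono h2)
    have key : (P[(g s i) * (g t i) | ℱ (t - 1)]) =ᵐ[P] g s i * P[g t i | ℱ (t - 1)] :=
      condExp_mul_of_stronglyMeasurable_left hsm (hprodInt s hs t ht i) (hgInt t ht i)
    have key2 : (P[(g s i) * (g t i) | ℱ (t - 1)]) =ᵐ[P] 0 := by
      filter_upwards [key, hg0 t ht i] with ω h1 h2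
      rw [h1]; simp [h2]
    calc ∫ ω, g s i ω * g t i ω ∂P
        = ∫ ω, (P[(g s i) * (g t i) | ℱ (t - 1)]) ω ∂P :=
          (integral_condExp (hle (t - 1))).symm
      _ = ∫ ω, (0 : ℝ) ∂P := integral_congr_ae key2
      _ = 0 := integral_zero _ _
  -- second moment of each coordinate sum
  have hGsq : ∀ i : Fin d, ∫ ω, (∑ t ∈ I, g t i ω) ^ 2 ∂P ≤ 4 * T := by
    intro i
    have hexp : ∀ ω, (∑ t ∈ I, g t i ω) ^ 2 = ∑ s ∈ I, ∑ t ∈ I, g s i ω * g t i ω :=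
      fun ω => by rw [sq, Finset.sum_mul_sum]
    calc ∫ ω, (∑ t ∈ I, g t i ω) ^ 2 ∂P
        = ∫ ω, ∑ s ∈ I, ∑ t ∈ I, g s i ω * g t i ω ∂P := by
          exact integral_congr_ae (Filter.Eventually.of_forall fun ω => hexp ω)
      _ = ∑ s ∈ I, ∫ ω, ∑ t ∈ I, g s i ω * g t i ω ∂P := by
          exact integral_finset_sum I fun s hs =>
            integrable_finset_sum I fun t ht => hprodInt s hs t ht i
      _ = ∑ s ∈ I, ∑ t ∈ I, ∫ ω, g s i ω * g t i ω ∂P := by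
          refine Finset.sum_congr rfl fun s hs => ?_
          exact integral_finset_sum I fun t ht => hprodInt s hs t ht i
      _ = ∑ s ∈ I, ∫ ω, g s i ω * g s i ω ∂P := by
          refine Finset.sum_congr rfl fun s hs => ?_
          refine Finset.sum_eq_single_of_mem s hs fun t ht hne => ?_
          rcases lt_or_gt_of_ne hne with h | h
          · have h0 := hcross t ht s hs h i
            calc ∫ ω, g s i ω * g t i ω ∂P = ∫ ω, g t i ω * g s i ω ∂P :=
                  integral_congr_ae (Filter.Eventually.of_forall fun ω => mul_comm _ _)
              _ = 0 := h0
          · exact hcross s hs t ht h i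
      _ ≤ ∑ s ∈ I, (4 : ℝ) := by
          refine Finset.sum_le_sum fun s hs => ?_
          have hb : ∀ᵐ ω ∂P, g s i ω * g s i ω ≤ 4 := by
            filter_upwards [hg_bdd s hs i] with ω h
            nlinarith [abs_nonneg (g s i ω), neg_abs_le (g s i ω), le_abs_self (g s i ω)]
          calc ∫ ω, g s i ω * g s i ω ∂P ≤ ∫ _ω, (4 : ℝ) ∂P :=
                integral_mono_ae (hprodInt s hs s hs i) (integrable_const _) hb
            _ = 4 := by simp
      _ = 4 * T := by
          rw [Finset.sum_const, hIdef, Nat.card_Icc]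
          simp [mul_comm]
  -- the sum process
  set S : Ω → EuclideanSpace ℝ (Fin d) := fun ω => ∑ t ∈ I, (a t ω - δ t ω) with hSdef
  have hSi : ∀ ω (i : Fin d), S ω i = ∑ t ∈ I, g t i ω := by
    intro ω i
    have h := map_sum (EuclideanSpace.proj (𝕜 := ℝ) i) (fun t => a t ω - δ t ω) I
    exact h
  have hS_sm : StronglyMeasurable S := by
    refine Finset.stronglyMeasurable_fun_sum I fun t ht => ?_
    exact ((ha_meas t ht).mono (hle t)).sub ((hδ_meas t ht).mono (hle (t - 1)))
  have hSnormsq : ∀ ω, ‖S ω‖ ^ 2 = ∑ i : Fin d, (∑ t ∈ I, g t i ω) ^ 2 := by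
    intro ω
    rw [EuclideanSpace.norm_eq, Real.sq_sqrt (Finset.sum_nonneg fun i _ => sq_nonneg _)]
    refine Finset.sum_congr rfl fun i _ => ?_
    rw [Real.norm_eq_abs, sq_abs, hSi ω i]
  -- second moment bound
  have hSsqInt : Integrable (fun ω => ‖S ω‖ ^ 2) P := by
    simp_rw [fun ω => hSnormsq ω]
    refine integrable_finset_sum _ fun i _ => ?_
    have : (fun ω => (∑ t ∈ I, g t i ω) ^ 2)
        = fun ω => ∑ s ∈ I, ∑ t ∈ I, g s i ω * g t i ω := by
      funext ω; rw [sq, Finset.sum_mul_sum]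
    rw [this]
    exact integrable_finset_sum I fun s hs =>
      integrable_finset_sum I fun t ht => hprodInt s hs t ht i
  have hS2 : ∫ ω, ‖S ω‖ ^ 2 ∂P ≤ 4 * d * T := by
    calc ∫ ω, ‖S ω‖ ^ 2 ∂P = ∫ ω, ∑ i : Fin d, (∑ t ∈ I, g t i ω) ^ 2 ∂P :=
          integral_congr_ae (Filter.Eventually.of_forall fun ω => hSnormsq ω)
      _ = ∑ i : Fin d, ∫ ω, (∑ t ∈ I, g t i ω) ^ 2 ∂P := by
          refine integral_finset_sum _ fun i _ => ?_
          have : (fun ω => (∑ t ∈ I, g t i ω) ^ 2)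
              = fun ω => ∑ s ∈ I, ∑ t ∈ I, g s i ω * g t i ω := by
            funext ω; rw [sq, Finset.sum_mul_sum]
          rw [this]
          exact integrable_finset_sum I fun s hs =>
            integrable_finset_sum I fun t ht => hprodInt s hs t ht i
      _ ≤ ∑ _i : Fin d, (4 * (T : ℝ)) := Finset.sum_le_sum fun i _ => hGsq i
      _ = 4 * d * T := by simp [Finset.sum_const]; ring
  -- a.e. bound on ‖S‖
  have hTpos : (0 : ℝ) < T := by exact_mod_cast hT
  have hδvec : ∀ t ∈ I, ∀ᵐ ω ∂P, ‖δ t ω‖ ≤ Real.sqrt d := by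
    intro t ht
    have hall : ∀ᵐ ω ∂P, ∀ i : Fin d, |δ t ω i| ≤ 1 :=
      (ae_all_iff).2 fun i => hδi_bdd t ht i
    filter_upwards [hall] with ω hω
    rw [EuclideanSpace.norm_eq]
    have hle1 : ∑ i : Fin d, ‖δ t ω i‖ ^ 2 ≤ ∑ _i : Fin d, (1 : ℝ) := by
      refine Finset.sum_le_sum fun i _ => ?_
      have := hω i
      rw [Real.norm_eq_abs]
      nlinarith [abs_nonneg (δ t ω i)]
    calc Real.sqrt (∑ i : Fin d, ‖δ t ω i‖ ^ 2) ≤ Real.sqrt (∑ _i : Fin d, (1 : ℝ)) :=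
          Real.sqrt_le_sqrt hle1
      _ = Real.sqrt d := by simp
  have hSbd : ∀ᵐ ω ∂P, ‖S ω‖ ≤ T * (1 + Real.sqrt d) := by
    have h1 : ∀ᵐ ω ∂P, ∀ t ∈ I, ‖a t ω‖ ≤ 1 :=
      (ae_ball_iff (Finset.countable_toSet I)).2 fun t ht => ha_bdd t ht
    have h2 : ∀ᵐ ω ∂P, ∀ t ∈ I, ‖δ t ω‖ ≤ Real.sqrt d :=
      (ae_ball_iff (Finset.countable_toSet I)).2 fun t ht => hδvec t ht
    filter_upwards [h1, h2] with ω hω1 hω2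
    calc ‖S ω‖ ≤ ∑ t ∈ I, ‖a t ω - δ t ω‖ := norm_sum_le _ _
      _ ≤ ∑ t ∈ I, (1 + Real.sqrt d) := by
          refine Finset.sum_le_sum fun t ht => ?_
          calc ‖a t ω - δ t ω‖ ≤ ‖a t ω‖ + ‖δ t ω‖ := norm_sub_le _ _
            _ ≤ 1 + Real.sqrt d := add_le_add (hω1 t ht) (hω2 t ht)
      _ = T * (1 + Real.sqrt d) := by
          rw [Finset.sum_const, hIdef, Nat.card_Icc]
          simp
          ring
  have hSnormInt : Integrable (fun ω => ‖S ω‖) P := by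
    refine (integrable_const ((T : ℝ) * (1 + Real.sqrt d))).mono'
      hS_sm.norm.aestronglyMeasurable ?_
    filter_upwards [hSbd] with ω h
    simpa using h
  have hSmem : MemLp (fun ω => ‖S ω‖) 2 P := by
    refine MemLp.of_bound hS_sm.norm.aestronglyMeasurable ((T : ℝ) * (1 + Real.sqrt d)) ?_
    filter_upwards [hSbd] with ω h
    simpa using h
  -- Jensen via nonnegativity of the variance
  have hjensen : (∫ ω, ‖S ω‖ ∂P) ^ 2 ≤ ∫ ω, ‖S ω‖ ^ 2 ∂P := by
    have h0 := ProbabilityTheory.variance_nonneg (fun ω => ‖S ω‖) P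
    rw [ProbabilityTheory.variance_eq_sub hSmem] at h0
    simp only [Pi.pow_apply] at h0
    linarith
  have hSnorm_le : ∫ ω, ‖S ω‖ ∂P ≤ Real.sqrt (4 * d * T) := by
    have hnn : (0 : ℝ) ≤ ∫ ω, ‖S ω‖ ∂P := integral_nonneg fun ω => norm_nonneg _
    rw [Real.le_sqrt hnn (by positivity)]
    exact hjensen.trans hS2
  -- final chain
  set X : Ω → EuclideanSpace ℝ (Fin d) := fun ω => (T : ℝ)⁻¹ • ∑ t ∈ I, a t ω with hXdef
  set Y : Ω → EuclideanSpace ℝ (Fin d) := fun ω => (T : ℝ)⁻¹ • ∑ t ∈ I, δ t ω with hYdef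
  have hXY : ∀ ω, X ω - Y ω = (T : ℝ)⁻¹ • S ω := by
    intro ω
    rw [hXdef, hYdef, hSdef]
    simp only [Finset.sum_sub_distrib, smul_sub]
  have hXsm : AEStronglyMeasurable X P :=
    ((Finset.stronglyMeasurable_fun_sum I fun t ht =>
      (ha_meas t ht).mono (hle t)).const_smul ((T : ℝ)⁻¹)).aestronglyMeasurable
  have hYsm : AEStronglyMeasurable Y P :=
    ((Finset.stronglyMeasurable_fun_sum I fun t ht =>
      (hδ_meas t ht).mono (hle (t - 1))).const_smul ((T : ℝ)⁻¹)).aestronglyMeasurable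
  have hSInt : Integrable S P := integrable_finset_sum I fun t ht =>
    (haInt t ht).sub (hδInt t ht)
  have hXYInt : Integrable (fun ω => X ω - Y ω) P := by
    have : Integrable (fun ω => (T : ℝ)⁻¹ • S ω) P := hSInt.smul ((T : ℝ)⁻¹)
    exact this.congr (Filter.Eventually.of_forall fun ω => (hXY ω).symm)
  have hRdiff_bd : ∀ ω, ‖R (X ω) - R (Y ω)‖ ≤ (L : ℝ) * ‖X ω - Y ω‖ := by
    intro ω
    rw [Real.norm_eq_abs, ← Real.dist_eq]
    calc dist (R (X ω)) (R (Y ω)) ≤ (L : ℝ) * dist (X ω) (Y ω) := hR.dist_le_mul _ _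
      _ = (L : ℝ) * ‖X ω - Y ω‖ := by rw [dist_eq_norm]
  have hRdiffInt : Integrable (fun ω => R (X ω) - R (Y ω)) P :=
    Integrable.mono' (hXYInt.norm.const_mul (L : ℝ))
      ((hR.continuous.comp_aestronglyMeasurable hXsm).sub
        (hR.continuous.comp_aestronglyMeasurable hYsm))
      (Filter.Eventually.of_forall hRdiff_bd)
  have hmain : |∫ ω, (R (X ω) - R (Y ω)) ∂P|
      ≤ 2 * (L : ℝ) * Real.sqrt ((d : ℝ) / (T : ℝ)) := by
    calc |∫ ω, (R (X ω) - R (Y ω)) ∂P| ≤ ∫ ω, ‖R (X ω) - R (Y ω)‖ ∂P := by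
          rw [← Real.norm_eq_abs]
          exact norm_integral_le_integral_norm _
      _ ≤ ∫ ω, (L : ℝ) * ‖X ω - Y ω‖ ∂P :=
          integral_mono_ae hRdiffInt.norm (hXYInt.norm.const_mul _)
            (Filter.Eventually.of_forall hRdiff_bd)
      _ = (L : ℝ) * ∫ ω, ‖X ω - Y ω‖ ∂P := integral_const_mul _ _
      _ = (L : ℝ) * ((T : ℝ)⁻¹ * ∫ ω, ‖S ω‖ ∂P) := by
          congr 1
          rw [← integral_const_mul]
          refine integral_congr_ae (Filter.Eventually.of_forall fun ω => ?_)
          show ‖X ω - Y ω‖ = (T : ℝ)⁻¹ * ‖S ω‖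
          rw [hXY ω, norm_smul, Real.norm_eq_abs, abs_of_nonneg (by positivity)]
      _ ≤ (L : ℝ) * ((T : ℝ)⁻¹ * Real.sqrt (4 * d * T)) := by
          refine mul_le_mul_of_nonneg_left ?_ L.coe_nonneg
          exact mul_le_mul_of_nonneg_left hSnorm_le (by positivity)
      _ = 2 * (L : ℝ) * Real.sqrt ((d : ℝ) / (T : ℝ)) := by
          have h1 : Real.sqrt (4 * d * T) = 2 * Real.sqrt ((d : ℝ) * T) := by
            rw [show (4 : ℝ) * d * T = 4 * ((d : ℝ) * T) by ring,
              Real.sqrt_mul (by norm_num),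
              show Real.sqrt 4 = 2 by
                rw [show (4 : ℝ) = 2 ^ 2 by norm_num, Real.sqrt_sq (by norm_num)]]
          have h2 : Real.sqrt ((d : ℝ) / T) = (T : ℝ)⁻¹ * Real.sqrt ((d : ℝ) * T) := by
            rw [show (d : ℝ) / T = ((d : ℝ) * T) * ((T : ℝ)⁻¹) ^ 2 by field_simp,
              Real.sqrt_mul (by positivity), Real.sqrt_sq (by positivity), mul_comm]
          rw [h1, h2]
          ring
  exact hmain
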